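/- Suppose an m × n measurement matrix A is (e₀, e₁, e'₀, e'₁)-correcting for d-sparse vectors, and that (e'₀+e'₁+1) divides d. Then (max{e₀, e₁} + 1)/(e'₀ + e'₁ + 1) ≤ m/d. -/

import Mathlib

/-- `(x, y)` is `(e₀, e₁)`-close: `y` is obtained from `x` by flipping at most `e₀`
bits from `0` to `1` and at most `e₁` bits from `1` to `0`. -/
def Close {ι : Type*} [Fintype ι] (e0 e1 : ℕ) (x y : ι → Bool) : Prop :=
  (Finset.univ.filter fun i => x i = false ∧ y i = true).card ≤ e0 ∧
  (Finset.univ.filter fun i => x i = true ∧ y i = false).card ≤ e1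

/-- `Meas A x = A[x]`: the bitwise OR of the columns of `A` indexed by the support of `x`. -/
def Meas {ι κ : Type*} [Fintype ι] (A : κ → ι → Bool) (x : ι → Bool) : κ → Bool :=
  fun j => decide (∃ i, A j i = true ∧ x i = true)

/-- `x` is `d`-sparse: it has at most `d` nonzero coordinates. -/
def Sparse {ι : Type*} [Fintype ι] (d : ℕ) (x : ι → Bool) : Prop :=
  (Finset.univ.filter fun i => x i = true).card ≤ d

/-- `A` is `(e₀, e₁, e₀', e₁')`-correcting for `d`-sparse vectors: for every `y` there is a
valid decoding `z` such that for every `d`-sparse `x`, whenever `(x, z)` are `(e₀', e₁')`-far,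
`(A[x], y)` are `(e₀, e₁)`-far. -/
def Correcting {m n : ℕ} (A : Fin m → Fin n → Bool) (d e0 e1 e0' e1' : ℕ) : Prop :=
  ∀ y : Fin m → Bool, ∃ z : Fin n → Bool, ∀ x : Fin n → Bool, Sparse d x →
    ¬ Close e0' e1' x z → ¬ Close e0 e1 (Meas A x) y

/-- If an `m × n` matrix `A` is `(e₀, e₁, e₀', e₁')`-correcting for `d`-sparse
vectors and `(e₀'+e₁'+1) ∣ d`, then `(max{e₀,e₁}+1)/(e₀'+e₁'+1) ≤ m/d`. -/
lemma close_refl {ι : Type*} [Fintype ι] (e0 e1 : ℕ) (u : ι → Bool) : Close e0 e1 u u := by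
  constructor <;>
  · rw [Finset.filter_false_of_mem] <;> simp +contextual

theorem stmt7 (m n d e0 e1 e0' e1' : ℕ) (A : Fin m → Fin n → Bool)
    (hd : 0 < d) (hdn : d ≤ n) (hdvd : (e0' + e1' + 1) ∣ d)
    (hA : Correcting A d e0 e1 e0' e1') :
    ((max e0 e1 : ℝ) + 1) / ((e0' : ℝ) + e1' + 1) ≤ (m : ℝ) / d := by
  set M := max e0 e1 with hM
  set s := e0' + e1' + 1 with hs
  obtain ⟨t, ht⟩ := hdvd
  have hspos : 0 < s := by omega
  have hnpos : 0 < n := lt_of_lt_of_le hd hdn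
  set x : ℕ → Fin n → Bool := fun i j => decide (j.val < i * s) with hxdef
  set W : (Fin m → Bool) → ℕ := fun u => (Finset.univ.filter fun j => u j = true).card with hWdef
  -- sparsity
  have hsp : ∀ k, k * s ≤ d → Sparse d (x k) := by
    intro k hk
    unfold Sparse
    calc (Finset.univ.filter fun j => x k j = true).card
        ≤ (Finset.range d).card := by
          apply Finset.card_le_card_of_injOn Fin.val
          · intro j hj
            simp only [hxdef, Finset.mem_coe, Finset.mem_filter, Finset.mem_univ, true_and, decide_eq_true_iff] at hj
            exact Finset.mem_range.mpr (lt_of_lt_of_le hj (le_trans hk le_rfl))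
          · exact fun a _ b _ h => Fin.val_injective h
      _ = d := Finset.card_range d
  -- key step
  have key : ∀ i, i < t → W (Meas A (x i)) + (M + 1) ≤ W (Meas A (x (i+1))) := by
    intro i hi
    have hle : (i+1) * s ≤ d := by
      rw [ht, Nat.mul_comm s t]; exact Nat.mul_le_mul_right s (by omega)
    have hle' : i * s ≤ d := le_trans (Nat.mul_le_mul_right s (by omega)) hle
    have hmono : ∀ j, x i j = true → x (i+1) j = true := by
      intro j hj
      simp only [hxdef, decide_eq_true_iff] at hj ⊢
      calc j.val < i * s := hj
        _ ≤ (i+1) * s := Nat.mul_le_mul_right s (by omega)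
    have hmeasmono : ∀ j, Meas A (x i) j = true → Meas A (x (i+1)) j = true := by
      intro j hj
      simp only [Meas, decide_eq_true_iff] at hj ⊢
      obtain ⟨k, hk1, hk2⟩ := hj
      exact ⟨k, hk1, hmono k hk2⟩
    -- the difference set D
    set D := Finset.univ.filter (fun j : Fin n => i * s ≤ j.val ∧ j.val < (i+1) * s) with hD
    have hDcard : s ≤ D.card := by
      have : (Finset.Ico (i*s) ((i+1)*s)).card ≤ D.card := by
        apply Finset.card_le_card_of_injOn (fun a => (⟨a % n, Nat.mod_lt a hnpos⟩ : Fin n))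
        · intro a ha
          simp only [Finset.mem_coe, Finset.mem_Ico] at ha
          have han : a < n := lt_of_lt_of_le (lt_of_lt_of_le ha.2 hle) hdn
          simp only [hD, Finset.mem_coe, Finset.mem_filter, Finset.mem_univ, true_and]
          rw [Nat.mod_eq_of_lt han]
          exact ha
        · intro a ha b hb hab
          simp only [Finset.coe_Ico, Set.mem_Ico] at ha hb
          have han : a < n := lt_of_lt_of_le (lt_of_lt_of_le ha.2 hle) hdn
          have hbn : b < n := lt_of_lt_of_le (lt_of_lt_of_le hb.2 hle) hdn
          have := congrArg Fin.val hab
          simpa [Nat.mod_eq_of_lt han, Nat.mod_eq_of_lt hbn] using this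
      rw [Nat.card_Ico] at this
      have : (i+1)*s - i*s = s := by rw [Nat.succ_mul]; omega
      omega
    have hDu : ∀ j ∈ D, x i j = false := by
      intro j hj
      simp only [hD, Finset.mem_filter] at hj
      exact decide_eq_false (by omega)
    have hDv : ∀ j ∈ D, x (i+1) j = true := by
      intro j hj
      simp only [hD, Finset.mem_filter] at hj
      exact decide_eq_true hj.2.2
    -- first application : y = Meas A (x i)
    obtain ⟨z1, hz1⟩ := hA (Meas A (x i))
    have hcz1 : Close e0' e1' (x i) z1 := by
      by_contra hcon
      exact hz1 (x i) (hsp i hle') hcon (close_refl e0 e1 _)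
    have hfar1 : ¬ Close e0' e1' (x (i+1)) z1 := by
      intro hcl
      -- D.filter z1=true ⊆ flips of (x i, z1)
      have h1 : (D.filter fun j => z1 j = true).card ≤ e0' := by
        refine le_trans (Finset.card_le_card ?_) hcz1.1
        intro j hj
        simp only [Finset.mem_filter] at hj ⊢
        exact ⟨Finset.mem_univ j, hDu j hj.1, hj.2⟩
      have h2 : (D.filter fun j => ¬ z1 j = true).card ≤ e1' := by
        refine le_trans (Finset.card_le_card ?_) hcl.2
        intro j hj
        simp only [Finset.mem_filter, Bool.not_eq_true] at hj ⊢
        exact ⟨Finset.mem_univ j, hDv j hj.1, hj.2⟩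
      have := Finset.card_filter_add_card_filter_not (s := D) (p := fun j => z1 j = true)
      omega
    have hres1 := hz1 (x (i+1)) (hsp (i+1) hle) hfar1
    -- second application : y = Meas A (x (i+1))
    obtain ⟨z2, hz2⟩ := hA (Meas A (x (i+1)))
    have hcz2 : Close e0' e1' (x (i+1)) z2 := by
      by_contra hcon
      exact hz2 (x (i+1)) (hsp (i+1) hle) hcon (close_refl e0 e1 _)
    have hfar2 : ¬ Close e0' e1' (x i) z2 := by
      intro hcl
      have h1 : (D.filter fun j => ¬ z2 j = true).card ≤ e1' := by
        refine le_trans (Finset.card_le_card ?_) hcz2.2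
        intro j hj
        simp only [Finset.mem_filter, Bool.not_eq_true] at hj ⊢
        exact ⟨Finset.mem_univ j, hDv j hj.1, hj.2⟩
      have h2 : (D.filter fun j => z2 j = true).card ≤ e0' := by
        refine le_trans (Finset.card_le_card ?_) hcl.1
        intro j hj
        simp only [Finset.mem_filter] at hj ⊢
        exact ⟨Finset.mem_univ j, hDu j hj.1, hj.2⟩
      have := Finset.card_filter_add_card_filter_not (s := D) (p := fun j => z2 j = true)
      omega
    have hres2 := hz2 (x i) (hsp i hle') hfar2
    -- extract the weight gap
    set E := Finset.univ.filter (fun j => Meas A (x i) j = false ∧ Meas A (x (i+1)) j = true)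
      with hE
    have hE1 : e1 + 1 ≤ E.card := by
      rw [Close, not_and_or] at hres1
      rcases hres1 with h | h
      · exfalso
        apply h
        rw [Finset.filter_false_of_mem]
        · simp
        · intro j _ hj
          have := hmeasmono j
          rw [hj.2] at this
          simp [this rfl] at hj
      · rw [not_le] at h
        refine le_trans h (le_of_eq ?_)
        congr 1
        apply Finset.filter_congr
        intro j _
        tauto
    have hE0 : e0 + 1 ≤ E.card := by
      rw [Close, not_and_or] at hres2
      rcases hres2 with h | h
      · rw [not_le] at h
        exact le_trans h le_rfl
      · exfalso
        apply h
        rw [Finset.filter_false_of_mem]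
        · simp
        · intro j _ hj
          have := hmeasmono j
          rw [hj.1] at this
          simp [this rfl] at hj
    have hEM : M + 1 ≤ E.card := by
      rw [hM]; rcases max_cases e0 e1 with ⟨h, _⟩ | ⟨h, _⟩ <;> omega
    -- weight identity
    have hWsum : W (Meas A (x (i+1))) = W (Meas A (x i)) + E.card := by
      have hsplit := Finset.card_filter_add_card_filter_not
        (s := Finset.univ.filter fun j => Meas A (x (i+1)) j = true)
        (p := fun j => Meas A (x i) j = true)
      have e1' : ((Finset.univ.filter fun j => Meas A (x (i+1)) j = true).filter
          fun j => Meas A (x i) j = true) = Finset.univ.filter fun j => Meas A (x i) j = true := by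
        ext j
        simp only [Finset.mem_filter, Finset.mem_univ, true_and]
        exact ⟨fun h => h.2, fun h => ⟨hmeasmono j h, h⟩⟩
      have e2' : ((Finset.univ.filter fun j => Meas A (x (i+1)) j = true).filter
          fun j => ¬ Meas A (x i) j = true) = E := by
        ext j
        simp only [hE, Finset.mem_filter, Finset.mem_univ, true_and, Bool.not_eq_true]
        tauto
      rw [e1', e2'] at hsplit
      simp only [hWdef]
      omega
    omega
  -- induction
  have main : ∀ i, i ≤ t → i * (M+1) ≤ W (Meas A (x i)) := by
    intro i
    induction i with
    | zero => intro _; simp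
    | succ i ih =>
      intro h
      calc (i+1) * (M+1) = i * (M+1) + (M+1) := by ring
        _ ≤ W (Meas A (x i)) + (M+1) := Nat.add_le_add_right (ih (by omega)) _
        _ ≤ W (Meas A (x (i+1))) := key i (by omega)
  have hWm : W (Meas A (x t)) ≤ m := by
    simp only [hWdef]
    exact le_trans (Finset.card_filter_le _ _) (by simp)
  have hmain : t * (M+1) ≤ m := le_trans (main t le_rfl) hWm
  -- real arithmetic
  have htpos : 0 < t := by
    rcases Nat.eq_zero_or_pos t with h | h
    · subst h; omega
    · exact h
  have hsR : ((e0' : ℝ) + e1' + 1) = (s : ℝ) := by rw [hs]; push_cast; ring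
  have hMR : ((M : ℝ) + 1) = ((M + 1 : ℕ) : ℝ) := by push_cast; ring
  rw [hsR, div_le_div_iff₀ (by positivity) (by exact_mod_cast hd)]
  have hdR : (d : ℝ) = (s : ℝ) * t := by rw [ht]; push_cast; ring
  rw [hdR]
  have h1 : ((t * (M+1) : ℕ) : ℝ) ≤ (m : ℝ) := by exact_mod_cast hmain
  push_cast at h1
  rw [show ((e0:ℝ) ⊔ (e1:ℝ)) = ((M:ℕ):ℝ) by rw [hM, Nat.cast_max]]
  nlinarith [(by exact_mod_cast hspos : (0:ℝ) < (s:ℝ))]
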